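/- Let f : (0,∞) → (0,∞) be a strictly increasing convex bijection of (0,∞) onto (0,∞) whose inverse f⁻¹ satisfies f⁻¹(A·B) ≥ f⁻¹(A)·f⁻¹(B) for all A, B > 0. Let n be a positive integer, and let μ_1,…,μ_n and Q_1,…,Q_n be positive real numbers. Define a_i = Q_i·f⁻¹(1/(μ_i·Q_i)) / (Σ_{j=1}^n Q_j) for i = 1,…,n. Then for all positive real numbers x_1,…,x_n, Σ_{i=1}^n f(x_i)/μ_i ≥ (Σ_{j=1}^n Q_j)·f(Σ_{i=1}^n a_i·x_i). -/

import Mathlib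

open Finset in
/-- The general convexity argument of Theorem 2: if f is a positive, strictly increasing,
convex bijection of (0,∞) onto (0,∞) with inverse g satisfying g(A·B) ≥ g(A)·g(B),
then with a_i = Q_i·g(1/(μ_i·Q_i))/Σ_j Q_j we have
Σ_i f(x_i)/μ_i ≥ (Σ_j Q_j)·f(Σ_i a_i·x_i). -/
theorem convex_bohr_type_general (f g : ℝ → ℝ)
    (hf_pos : ∀ x, 0 < x → 0 < f x)
    (hf_mono : StrictMonoOn f (Set.Ioi 0))
    (hf_conv : ConvexOn ℝ (Set.Ioi 0) f)
    (hg_pos : ∀ y, 0 < y → 0 < g y)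
    (hgf : ∀ x, 0 < x → g (f x) = x)
    (hfg : ∀ y, 0 < y → f (g y) = y)
    (hg_supmul : ∀ A B, 0 < A → 0 < B → g A * g B ≤ g (A * B))
    (n : ℕ) (hn : 0 < n) (μ Q : Fin n → ℝ) (hμ : ∀ i, 0 < μ i) (hQ : ∀ i, 0 < Q i)
    (a : Fin n → ℝ) (ha : ∀ i, a i = Q i * g (1 / (μ i * Q i)) / ∑ j, Q j)
    (x : Fin n → ℝ) (hx : ∀ i, 0 < x i) :
    ∑ i, f (x i) / μ i ≥ (∑ j, Q j) * f (∑ i, a i * x i) := by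
  set S : ℝ := ∑ j, Q j with hS
  have hS_pos : 0 < S := Finset.sum_pos (fun i _ => hQ i) ⟨⟨0, hn⟩, Finset.mem_univ _⟩
  set w : Fin n → ℝ := fun i => Q i / S with hw
  set z : Fin n → ℝ := fun i => g (1 / (μ i * Q i)) * x i with hz
  have hμQ : ∀ i, 0 < 1 / (μ i * Q i) := fun i =>
    one_div_pos.mpr (mul_pos (hμ i) (hQ i))
  have hz_pos : ∀ i, 0 < z i := fun i => mul_pos (hg_pos _ (hμQ i)) (hx i)
  have hax : ∀ i, a i * x i = w i • z i := by
    intro i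
    simp only [ha, hw, hz, smul_eq_mul]
    field_simp
  have hsum_w : ∑ i, w i = 1 := by
    simp only [hw, ← Finset.sum_div]
    field_simp
    exact hS.symm
  have jensen : f (∑ i, w i • z i) ≤ ∑ i, w i • f (z i) :=
    hf_conv.map_sum_le (fun i _ => le_of_lt (div_pos (hQ i) hS_pos)) hsum_w
      (fun i _ => hz_pos i)
  -- key per-index bound: f (z i) ≤ f (x i) / (μ i * Q i)
  have key : ∀ i, f (z i) ≤ f (x i) / (μ i * Q i) := by
    intro i
    have hfx : 0 < f (x i) := hf_pos _ (hx i)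
    have h1 : g (1 / (μ i * Q i)) * g (f (x i)) ≤ g (1 / (μ i * Q i) * f (x i)) :=
      hg_supmul _ _ (hμQ i) hfx
    have h2 : z i ≤ g (1 / (μ i * Q i) * f (x i)) := by
      simpa [hz, hgf _ (hx i)] using h1
    have h3 : f (z i) ≤ f (g (1 / (μ i * Q i) * f (x i))) := by
      rcases eq_or_lt_of_le h2 with h | h
      · rw [h]
      · exact le_of_lt (hf_mono (hz_pos i) (hg_pos _ (mul_pos (hμQ i) hfx)) h)
    rw [hfg _ (mul_pos (hμQ i) hfx)] at h3
    calc f (z i) ≤ 1 / (μ i * Q i) * f (x i) := h3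
      _ = f (x i) / (μ i * Q i) := by ring
  calc S * f (∑ i, a i * x i) = S * f (∑ i, w i • z i) := by
        simp only [hax]
    _ ≤ S * ∑ i, w i • f (z i) := by
        exact mul_le_mul_of_nonneg_left jensen (le_of_lt hS_pos)
    _ = ∑ i, Q i * f (z i) := by
        rw [Finset.mul_sum]
        refine Finset.sum_congr rfl fun i _ => ?_
        simp only [hw, smul_eq_mul]
        field_simp
    _ ≤ ∑ i, f (x i) / μ i := by
        refine Finset.sum_le_sum fun i _ => ?_
        have := mul_le_mul_of_nonneg_left (key i) (le_of_lt (hQ i))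
        calc Q i * f (z i) ≤ Q i * (f (x i) / (μ i * Q i)) := this
          _ = f (x i) / μ i := by
            have h1 : (μ i) ≠ 0 := ne_of_gt (hμ i)
            have h2 : (Q i) ≠ 0 := ne_of_gt (hQ i)
            field_simp
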